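/- arXiv:1308.0814 — 2 statements merged into one kernel-verified Lean document; each statement's English description precedes it below -/
import Mathlib

section
/- Let f, g : ℝ² → ℝ be nonzero polynomials of degree at most 4 with no common irreducible factor. Then the set {(x,y) : f(x,y) = 0 and g(x,y) = 0} has at most 16 elements. -/
open MvPolynomial Finset

namespace Stmt18Aux
set_option maxHeartbeats 1000000
set_option synthInstance.maxHeartbeats 200000

lemma fin2_sum_eq (m : Fin 2 →₀ ℕ) : (m.sum fun _ e => e) = m 0 + m 1 := by
  rw [Finsupp.sum_fintype _ _ fun _ => rfl, Fin.sum_univ_two]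

lemma finsupp_ext2 {a b : Fin 2 →₀ ℕ} (h0 : a 0 = b 0) (h1 : a 1 = b 1) : a = b := by
  ext i
  fin_cases i <;> assumption

lemma lex_fst_le {a A : ℕ × ℕ} (h : toLex a ≤ toLex A) : a.1 ≤ A.1 := by
  rcases Prod.Lex.toLex_le_toLex.mp h with h' | ⟨h1, h2⟩
  · exact h'.le
  · exact h1.le

lemma lex_split {a b A B : ℕ × ℕ} (h1 : toLex a ≤ toLex A) (h2 : toLex b ≤ toLex B)
    (h3 : a.1 + b.1 = A.1 + B.1) (h4 : a.2 + b.2 = A.2 + B.2) : a = A ∧ b = B := by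
  rcases Prod.Lex.toLex_le_toLex.mp h1 with hl | ⟨he1, he2⟩ <;>
    rcases Prod.Lex.toLex_le_toLex.mp h2 with hl' | ⟨he1', he2'⟩
  · have := lex_fst_le h2; omega
  · omega
  · omega
  · constructor <;> [exact Prod.ext he1 (by omega); exact Prod.ext he1' (by omega)]

lemma exists_lead (p : MvPolynomial (Fin 2) ℝ) (hp : p ≠ 0) :
    ∃ s, coeff s p ≠ 0 ∧ (∀ t, coeff t p ≠ 0 → toLex (t 0 + t 1, t 0) ≤ toLex (s 0 + s 1, s 0)) ∧
      s 0 + s 1 = p.totalDegree := by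
  obtain ⟨s, hs, hmax⟩ := Finset.exists_max_image p.support
    (fun m => toLex (m 0 + m 1, m 0)) (support_nonempty.mpr hp)
  refine ⟨s, mem_support_iff.mp hs, fun t ht => hmax t (mem_support_iff.mpr ht), ?_⟩
  have h1 : s 0 + s 1 ≤ p.totalDegree := by
    simpa [fin2_sum_eq] using le_totalDegree hs
  have h2 : p.totalDegree ≤ s 0 + s 1 := by
    rw [totalDegree]
    apply Finset.sup_le
    intro t ht
    have := lex_fst_le (hmax t ht)
    simpa [fin2_sum_eq] using this
  omega

theorem totalDegree_mul_eq {p q : MvPolynomial (Fin 2) ℝ} (hp : p ≠ 0) (hq : q ≠ 0) :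
    (p * q).totalDegree = p.totalDegree + q.totalDegree := by
  refine le_antisymm (totalDegree_mul p q) ?_
  obtain ⟨sp, hsp, hmp, hdp⟩ := exists_lead p hp
  obtain ⟨sq, hsq, hmq, hdq⟩ := exists_lead q hq
  have hco : coeff (sp + sq) (p * q) = coeff sp p * coeff sq q := by
    rw [coeff_mul]
    refine Finset.sum_eq_single_of_mem (sp, sq) (Finset.HasAntidiagonal.mem_antidiagonal.mpr rfl) ?_
    rintro ⟨a, b⟩ hab hne
    have habs : a + b = sp + sq := Finset.HasAntidiagonal.mem_antidiagonal.mp hab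
    by_contra hc
    have ha : coeff a p ≠ 0 := fun h => hc (by simp [h])
    have hb : coeff b q ≠ 0 := fun h => hc (by simp [h])
    have h0 : a 0 + b 0 = sp 0 + sq 0 := by
      have := congrArg (fun m : Fin 2 →₀ ℕ => m 0) habs; simpa using this
    have h1 : a 1 + b 1 = sp 1 + sq 1 := by
      have := congrArg (fun m : Fin 2 →₀ ℕ => m 1) habs; simpa using this
    obtain ⟨hA, hB⟩ := lex_split (hmp a ha) (hmq b hb) (by simp; omega) (by simp; omega)
    apply hne
    have hA1 := congrArg Prod.fst hA
    have hA2 := congrArg Prod.snd hA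
    have hB1 := congrArg Prod.fst hB
    have hB2 := congrArg Prod.snd hB
    simp only [] at hA1 hA2 hB1 hB2
    have e1 : a = sp := finsupp_ext2 hA2 (by omega)
    have e2 : b = sq := finsupp_ext2 hB2 (by omega)
    simp [e1, e2]
  have hne : coeff (sp + sq) (p * q) ≠ 0 := by
    rw [hco]; exact mul_ne_zero hsp hsq
  have := le_totalDegree (mem_support_iff.mpr hne)
  rw [fin2_sum_eq] at this
  simp only [Finsupp.add_apply] at this
  omega


/-- Pairs `(i,j)` of naturals with `i + j ≤ m`. -/
def box (m : ℕ) : Finset (ℕ × ℕ) :=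
  (Finset.range (m+1) ×ˢ Finset.range (m+1)).filter fun p => p.1 + p.2 ≤ m

lemma mem_box {m : ℕ} {p : ℕ × ℕ} : p ∈ box m ↔ p.1 + p.2 ≤ m := by
  simp only [box, mem_filter, mem_product, mem_range]
  omega

lemma box_eq (m : ℕ) : box m = (Finset.range (m+1)).biUnion
    (fun i => (Finset.range (m+1-i)).map ⟨Prod.mk i, fun _ _ h => (Prod.mk.injEq _ _ _ _ ▸ h).2⟩) := by
  ext ⟨a, b⟩
  simp only [mem_box, mem_biUnion, mem_range, mem_map, Function.Embedding.coeFn_mk,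
    Prod.mk.injEq]
  constructor
  · intro h; exact ⟨a, by omega, b, by omega, rfl⟩
  · rintro ⟨i, hi, j, hj, h⟩
    change (i, j) = (a, b) at h
    cases h; omega

lemma card_box (m : ℕ) : (box m).card * 2 = (m+1) * (m+2) := by
  rw [box_eq, Finset.card_biUnion]
  · have : ∀ i ∈ Finset.range (m+1),
        ((Finset.range (m+1-i)).map ⟨Prod.mk i, fun _ _ h => (Prod.mk.injEq _ _ _ _ ▸ h).2⟩).card
        = m + 1 - i := by
      intro i _; rw [Finset.card_map, Finset.card_range]
    rw [Finset.sum_congr rfl this]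
    have hrefl := Finset.sum_range_reflect (fun j => j + 1) (m + 1)
    have : ∀ j ∈ Finset.range (m+1), (m + 1 - 1 - j) + 1 = m + 1 - j := by
      intro j hj; rw [Finset.mem_range] at hj; omega
    rw [Finset.sum_congr rfl this] at hrefl
    rw [hrefl, Finset.sum_add_distrib, add_mul, Finset.sum_range_id_mul_two]
    simp [Finset.card_range]
    ring
  · intro i _ j _ hij
    simp only [Finset.disjoint_left, mem_map, Function.Embedding.coeFn_mk]
    rintro ⟨a, b⟩ ⟨x, _, hx⟩ ⟨y, _, hy⟩
    exact hij (by
      have h1 : i = a := congrArg Prod.fst hx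
      have h2 : j = a := congrArg Prod.fst hy
      omega)

/-- Equivalence between exponents of total degree ≤ m and `box m`. -/
noncomputable def boxEquiv (m : ℕ) :
    {n : Fin 2 →₀ ℕ | (n.sum fun _ e => e) ≤ m} ≃ (box m : Finset (ℕ × ℕ)) where
  toFun n := ⟨(n.1 0, n.1 1), mem_box.mpr (by have := n.2; rwa [Set.mem_setOf_eq, fin2_sum_eq] at this)⟩
  invFun p := ⟨Finsupp.equivFunOnFinite.symm ![p.1.1, p.1.2], by
    rw [Set.mem_setOf_eq, fin2_sum_eq]
    simpa using mem_box.mp p.2⟩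
  left_inv n := by
    ext i
    fin_cases i <;> simp
  right_inv p := by
    ext <;> simp

lemma finrank_V (m : ℕ) :
    Module.finrank ℝ (restrictTotalDegree (Fin 2) ℝ m) = (box m).card := by
  haveI : Fintype {n : Fin 2 →₀ ℕ | (n.sum fun _ e => e) ≤ m} :=
    Fintype.ofEquiv _ (boxEquiv m).symm
  rw [show restrictTotalDegree (Fin 2) ℝ m
      = restrictSupport ℝ {n : Fin 2 →₀ ℕ | (n.sum fun _ e => e) ≤ m} from rfl,
    Module.finrank_eq_card_basis (basisRestrictSupport ℝ _),
    Fintype.card_congr (boxEquiv m), Fintype.card_coe]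

/-! ### Linear algebra part -/

local notation "V" => restrictTotalDegree (Fin 2) ℝ

/-- Evaluation at a point as a linear map. -/
noncomputable def evL (x : Fin 2 → ℝ) : MvPolynomial (Fin 2) ℝ →ₗ[ℝ] ℝ where
  toFun p := eval x p
  map_add' p q := by simp
  map_smul' c p := by simp [smul_eq_C_mul]

@[simp] lemma evL_apply (x : Fin 2 → ℝ) (p : MvPolynomial (Fin 2) ℝ) : evL x p = eval x p := rfl

/-- Joint evaluation at the points of `S`. -/
noncomputable def ev (S : Finset (ℝ × ℝ)) : V 16 →ₗ[ℝ] (↥S → ℝ) :=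
  LinearMap.pi fun s => (evL ![(s : ℝ × ℝ).1, (s : ℝ × ℝ).2]).comp (V 16).subtype

@[simp] lemma ev_apply (S : Finset (ℝ × ℝ)) (p : V 16) (s : ↥S) :
    ev S p s = eval ![(s : ℝ × ℝ).1, (s : ℝ × ℝ).2] (p : MvPolynomial (Fin 2) ℝ) := rfl

lemma totalDegree_X_sub_C (i : Fin 2) (r : ℝ) :
    (X i - C r : MvPolynomial (Fin 2) ℝ).totalDegree ≤ 1 := by
  rw [sub_eq_add_neg, ← map_neg C r]
  refine le_trans (totalDegree_add _ _) ?_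
  simp [totalDegree_X]

lemma ev_surjective (S : Finset (ℝ × ℝ)) (hcard : S.card ≤ 17) :
    Function.Surjective (ev S) := by
  classical
  rw [← LinearMap.range_eq_top, ← top_le_iff, ← (Pi.basisFun ℝ ↥S).span_eq]
  refine Submodule.span_le.mpr ?_
  rintro _ ⟨s, rfl⟩
  rw [Pi.basisFun_apply]
  -- construct the interpolating polynomial
  set s₀ : ℝ × ℝ := (s : ℝ × ℝ) with hs₀
  set L : ℝ × ℝ → MvPolynomial (Fin 2) ℝ := fun t =>
    if t.1 = s₀.1 then X 1 - C t.2 else X 0 - C t.1 with hLdef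
  have hdegL : ∀ t, (L t).totalDegree ≤ 1 := by
    intro t; rw [hLdef]; dsimp only; split <;> apply totalDegree_X_sub_C
  have heval_self : ∀ t : ℝ × ℝ, eval ![t.1, t.2] (L t) = 0 := by
    intro t; rw [hLdef]; dsimp only; split <;> simp
  have hevalS : ∀ t : ℝ × ℝ, t ≠ s₀ → eval ![s₀.1, s₀.2] (L t) ≠ 0 := by
    intro t ht; rw [hLdef]; dsimp only; split
    · rename_i h
      have : t.2 ≠ s₀.2 := fun h2 => ht (Prod.ext h h2)
      simp only [map_sub, eval_X, eval_C]
      simp [sub_ne_zero]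
      exact fun hh => this hh.symm
    · rename_i h
      simp only [map_sub, eval_X, eval_C]
      simp [sub_ne_zero]
      exact fun hh => h hh.symm
  set P : MvPolynomial (Fin 2) ℝ := ∏ t ∈ S.erase s₀, L t with hP
  have hdegP : P.totalDegree ≤ 16 := by
    refine le_trans (totalDegree_finset_prod _ _) ?_
    calc (∑ t ∈ S.erase s₀, (L t).totalDegree) ≤ ∑ _t ∈ S.erase s₀, 1 :=
          Finset.sum_le_sum fun t _ => hdegL t
      _ = (S.erase s₀).card := by simp
      _ ≤ 16 := by
          have h : (S.erase s₀).card = S.card - 1 := Finset.card_erase_of_mem s.2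
          omega
  have hPs : eval ![s₀.1, s₀.2] P ≠ 0 := by
    rw [hP, map_prod]
    refine Finset.prod_ne_zero_iff.mpr fun t ht => ?_
    exact hevalS t (Finset.ne_of_mem_erase ht)
  have hPt : ∀ t : ℝ × ℝ, t ∈ S → t ≠ s₀ → eval ![t.1, t.2] P = 0 := by
    intro t htS htne
    rw [hP, map_prod]
    exact Finset.prod_eq_zero (Finset.mem_erase.mpr ⟨htne, htS⟩) (heval_self t)
  refine ⟨(eval ![s₀.1, s₀.2] P)⁻¹ • ⟨P, (mem_restrictTotalDegree _ _ _).mpr hdegP⟩, ?_⟩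
  funext u
  rw [map_smul, Pi.smul_apply, ev_apply, smul_eq_mul]
  by_cases hu : u = s
  · subst hu
    rw [Pi.single_eq_same]
    simp only [← hs₀]
    exact inv_mul_cancel₀ hPs
  · have hne : (u : ℝ × ℝ) ≠ s₀ := fun h => hu (by apply Subtype.ext; rw [h, hs₀])
    rw [hPt u u.2 hne, mul_zero, Pi.single_eq_of_ne hu]

/-! ### The combination maps -/

variable (f g : MvPolynomial (Fin 2) ℝ)

/-- `(p, q) ↦ p * f + q * g` as a linear map. -/
noncomputable def pairMul (a b : ℕ) :
    (V a × V b) →ₗ[ℝ] MvPolynomial (Fin 2) ℝ where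
  toFun p := (p.1 : MvPolynomial (Fin 2) ℝ) * f + (p.2 : MvPolynomial (Fin 2) ℝ) * g
  map_add' p q := by
    simp only [Prod.fst_add, Prod.snd_add, Submodule.coe_add]
    ring
  map_smul' c p := by
    simp only [Prod.smul_fst, Prod.smul_snd, Submodule.coe_smul, RingHom.id_apply,
      smul_eq_C_mul]
    ring

lemma arith (N d e A B C D : ℕ) (hd : d ≤ 4) (he : e ≤ 4)
    (hA : A * 2 = 17 * 18) (hB : B * 2 = (16 - d + 1) * (16 - d + 2))
    (hC : C * 2 = (16 - e + 1) * (16 - e + 2))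
    (hD : D * 2 = (16 - d - e + 1) * (16 - d - e + 2))
    (h : N + (B + C) ≤ A + D) : N ≤ 16 := by
  interval_cases d <;> interval_cases e <;> omega

lemma relprime (hf : f ≠ 0) (hg : g ≠ 0)
    (hcoprime : ¬ ∃ p : MvPolynomial (Fin 2) ℝ, Irreducible p ∧ p ∣ f ∧ p ∣ g) :
    IsRelPrime g f := by
  intro c hcg hcf
  by_contra hu
  have hc0 : c ≠ 0 := fun h => hg (zero_dvd_iff.mp (h ▸ hcg))
  obtain ⟨i, hi, hic⟩ := WfDvdMonoid.exists_irreducible_factor hu hc0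
  exact hcoprime ⟨i, hi, hic.trans hcf, hic.trans hcg⟩

/-- Core counting bound. -/
lemma core (hf : f ≠ 0) (hg : g ≠ 0) (hfd : f.totalDegree ≤ 4) (hgd : g.totalDegree ≤ 4)
    (hcoprime : ¬ ∃ p : MvPolynomial (Fin 2) ℝ, Irreducible p ∧ p ∣ f ∧ p ∣ g)
    (S : Finset (ℝ × ℝ))
    (hS : ∀ q ∈ S, eval ![q.1, q.2] f = 0 ∧ eval ![q.1, q.2] g = 0)
    (hcard : S.card ≤ 17) : S.card ≤ 16 := by
  classical
  set d := f.totalDegree with hd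
  set e := g.totalDegree with he
  -- the map φ : V (16-d) × V (16-e) → V 16
  have hmem : ∀ p : V (16 - d) × V (16 - e),
      pairMul f g (16 - d) (16 - e) p ∈ V 16 := by
    rintro ⟨⟨p, hp⟩, ⟨q, hq⟩⟩
    show p * f + q * g ∈ V 16
    rw [mem_restrictTotalDegree] at hp hq ⊢
    refine le_trans (totalDegree_add _ _) (max_le ?_ ?_)
    · exact le_trans (totalDegree_mul _ _) (by omega)
    · exact le_trans (totalDegree_mul _ _) (by omega)
  set φ : (V (16 - d) × V (16 - e)) →ₗ[ℝ] V 16 :=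
    LinearMap.codRestrict (V 16) (pairMul f g (16 - d) (16 - e)) hmem with hφ
  -- range φ ≤ ker (ev S)
  have hrk : LinearMap.range φ ≤ LinearMap.ker (ev S) := by
    rintro _ ⟨⟨⟨p, hp⟩, ⟨q, hq⟩⟩, rfl⟩
    rw [LinearMap.mem_ker]
    funext u
    have h1 := (hS u u.2).1
    have h2 := (hS u u.2).2
    simp only [hφ, ev_apply, LinearMap.codRestrict_apply, pairMul, LinearMap.coe_mk,
      AddHom.coe_mk, map_add, map_mul, h1, h2, mul_zero, add_zero, Pi.zero_apply]
  -- ker φ is controlled by V (16 - d - e)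
  have hker : Module.finrank ℝ (LinearMap.ker φ) ≤ (box (16 - d - e)).card := by
    -- the injection ψ : V (16-d-e) → V (16-d) × V (16-e)
    have hmemg : ∀ u : V (16 - d - e),
        (u : MvPolynomial (Fin 2) ℝ) * g ∈ V (16 - d) := by
      rintro ⟨u, hu⟩
      show u * g ∈ V (16 - d)
      rw [mem_restrictTotalDegree] at hu ⊢
      exact le_trans (totalDegree_mul _ _) (by omega)
    have hmemf : ∀ u : V (16 - d - e),
        -((u : MvPolynomial (Fin 2) ℝ) * f) ∈ V (16 - e) := by
      rintro ⟨u, hu⟩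
      show -(u * f) ∈ V (16 - e)
      rw [mem_restrictTotalDegree] at hu ⊢
      rw [totalDegree_neg]
      exact le_trans (totalDegree_mul _ _) (by omega)
    set ψ : V (16 - d - e) →ₗ[ℝ] (V (16 - d) × V (16 - e)) :=
      { toFun := fun u => (⟨(u : MvPolynomial (Fin 2) ℝ) * g, hmemg u⟩,
          ⟨-((u : MvPolynomial (Fin 2) ℝ) * f), hmemf u⟩)
        map_add' := fun u v => by
          ext <;> simp [add_mul] <;> ring
        map_smul' := fun c u => by
          ext <;> simp [smul_eq_C_mul, mul_assoc] } with hψ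
    have hsub : LinearMap.ker φ ≤ LinearMap.range ψ := by
      rintro ⟨⟨p, hp⟩, ⟨q, hq⟩⟩ hk
      rw [LinearMap.mem_ker] at hk
      have hk' : p * f + q * g = 0 := congrArg Subtype.val hk
      by_cases hp0 : p = 0
      · have hq0 : q = 0 := by
          have : q * g = 0 := by rw [hp0] at hk'; simpa using hk'
          rcases mul_eq_zero.mp this with h | h
          · exact h
          · exact absurd h hg
        refine ⟨0, ?_⟩
        rw [map_zero]
        ext <;> simp [hp0, hq0]
      · -- g divides p
        have hdvd : g ∣ p * f := ⟨-q, by linear_combination hk'⟩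
        have hgp : g ∣ p := (relprime f g hf hg hcoprime).dvd_of_dvd_mul_right hdvd
        obtain ⟨u, hu⟩ := hgp
        have hu0 : u ≠ 0 := fun h => hp0 (by rw [hu, h, mul_zero])
        have hdegu : u.totalDegree ≤ 16 - d - e := by
          have hdp : p.totalDegree ≤ 16 - d := (mem_restrictTotalDegree _ _ _).mp hp
          have := totalDegree_mul_eq hg hu0
          rw [← hu] at this
          omega
        have hqval : q = -(u * f) := by
          have h0 : g * (u * f + q) = 0 := by
            have : g * u * f + q * g = 0 := by rw [← hu]; exact hk'
            ring_nf
            ring_nf at this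
            linear_combination this
          rcases mul_eq_zero.mp h0 with h | h
          · exact absurd h hg
          · linear_combination h
        exact ⟨⟨u, (mem_restrictTotalDegree _ _ _).mpr hdegu⟩,
          Prod.ext (Subtype.ext (by show u * g = p; rw [hu]; exact mul_comm u g))
            (Subtype.ext (by show -(u * f) = q; exact hqval.symm))⟩
    have hinj : Module.finrank ℝ (LinearMap.ker φ) ≤ Module.finrank ℝ (LinearMap.range ψ) :=
      Submodule.finrank_mono hsub
    refine le_trans hinj (le_trans (LinearMap.finrank_range_le ψ) ?_)
    rw [finrank_V]
  -- rank-nullity for ev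
  have hev := LinearMap.finrank_range_add_finrank_ker (ev S)
  rw [LinearMap.range_eq_top.mpr (ev_surjective S hcard), finrank_top,
    Module.finrank_pi, Fintype.card_coe, finrank_V] at hev
  -- rank-nullity for φ
  have hφrn := LinearMap.finrank_range_add_finrank_ker φ
  rw [Module.finrank_prod, finrank_V, finrank_V] at hφrn
  have hle : Module.finrank ℝ (LinearMap.range φ) ≤ Module.finrank ℝ (LinearMap.ker (ev S)) :=
    Submodule.finrank_mono hrk
  refine arith S.card d e (box 16).card (box (16 - d)).card (box (16 - e)).card
    (box (16 - d - e)).card hfd hgd (by simpa using card_box 16) (card_box _) (card_box _)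
    (card_box _) (by omega)

end Stmt18Aux

/-- Bézout-type bound: two nonzero bivariate real polynomials of degree at
most 4 with no common irreducible factor have at most `16` common real zeros. -/
theorem stmt18 (f g : MvPolynomial (Fin 2) ℝ) (hf : f ≠ 0) (hg : g ≠ 0)
    (hfd : f.totalDegree ≤ 4) (hgd : g.totalDegree ≤ 4)
    (hcoprime : ¬ ∃ p : MvPolynomial (Fin 2) ℝ, Irreducible p ∧ p ∣ f ∧ p ∣ g) :
    ({q : ℝ × ℝ | eval ![q.1, q.2] f = 0 ∧ eval ![q.1, q.2] g = 0}).Finite ∧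
    ({q : ℝ × ℝ | eval ![q.1, q.2] f = 0 ∧ eval ![q.1, q.2] g = 0}).ncard ≤ 16 := by
  classical
  set Z := {q : ℝ × ℝ | eval ![q.1, q.2] f = 0 ∧ eval ![q.1, q.2] g = 0} with hZ
  have key : ∀ S : Finset (ℝ × ℝ), ↑S ⊆ Z → S.card ≤ 16 := by
    intro S hSZ
    by_contra hbig
    push_neg at hbig
    obtain ⟨T, hTS, hT⟩ := Finset.exists_subset_card_eq (show 17 ≤ S.card by omega)
    have h16 := Stmt18Aux.core f g hf hg hfd hgd hcoprime T
      (fun q hq => hSZ (hTS hq)) (le_of_eq hT)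
    omega
  have hfin : Z.Finite := by
    by_contra hinf
    obtain ⟨T, hTZ, hT⟩ := Set.Infinite.exists_subset_card_eq hinf 17
    have := key T hTZ
    omega
  refine ⟨hfin, ?_⟩
  rw [Set.ncard_eq_toFinset_card Z hfin]
  exact key hfin.toFinset (by simp)
end

section
/- Let κ and n be positive integers and suppose a set P of n points in the plane has all its distances to three fixed noncollinear points lying in a set of size κ, with Q = number of ordered pairs (q₁,q₂) of distinct points of P equidistant from the third fixed point. If Q ≤ C·κ^{8/3} and Q ≥ n²/(2κ) − n/2, then n = O(κ^{11/6}). -/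
open scoped Classical
/-- If all distances from a set `P` of `n` plane points to three fixed
noncollinear points lie in a set `D` of size `κ`, and `Q`, the number of ordered pairs of
distinct points of `P` equidistant from the third point, satisfies `Q ≤ C κ^{8/3}` and
`Q ≥ n²/(2κ) − n/2`, then `n = O(κ^{11/6})` (with the constant depending only on `C`). -/
theorem stmt19 (C : ℝ) (hC : 0 < C) :
    ∃ C' > (0 : ℝ), ∀ (n κ : ℕ), 0 < n → 0 < κ →
      ∀ (p₁ p₂ p₃ : EuclideanSpace ℝ (Fin 2)),
      ¬ Collinear ℝ ({p₁, p₂, p₃} : Set (EuclideanSpace ℝ (Fin 2))) →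
      ∀ (P : Finset (EuclideanSpace ℝ (Fin 2))) (D : Finset ℝ) (Q : ℕ),
      P.card = n → D.card = κ →
      (∀ q ∈ P, dist p₁ q ∈ D ∧ dist p₂ q ∈ D ∧ dist p₃ q ∈ D) →
      Q = ({qq ∈ P ×ˢ P | qq.1 ≠ qq.2 ∧ dist p₃ qq.1 = dist p₃ qq.2}).card →
      (Q : ℝ) ≤ C * (κ : ℝ) ^ ((8 : ℝ) / 3) →
      (n : ℝ) ^ 2 / (2 * κ) - (n : ℝ) / 2 ≤ (Q : ℝ) →
      (n : ℝ) ≤ C' * (κ : ℝ) ^ ((11 : ℝ) / 6) := by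
  refine ⟨Real.sqrt (2 * C) + 1, by positivity, ?_⟩
  intro n κ hn hκ p₁ p₂ p₃ _ P D Q _ _ _ _ hQle hQge
  set x : ℝ := (κ : ℝ) with hx
  have hx1 : (1 : ℝ) ≤ x := Nat.one_le_cast.mpr hκ
  have hx0 : (0 : ℝ) < x := lt_of_lt_of_le one_pos hx1
  set K : ℝ := x ^ ((11 : ℝ) / 6) with hK
  have hK1 : (1 : ℝ) ≤ K := Real.one_le_rpow hx1 (by norm_num)
  have hxK : x ≤ K := by
    calc x = x ^ (1 : ℝ) := (Real.rpow_one x).symm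
    _ ≤ K := Real.rpow_le_rpow_of_exponent_le hx1 (by norm_num)
  have hsq : x * x ^ ((8 : ℝ) / 3) = K ^ 2 := by
    rw [hK, ← Real.rpow_natCast (x ^ ((11:ℝ)/6)) 2, ← Real.rpow_mul hx0.le]
    rw [show ((11:ℝ)/6*((2:ℕ):ℝ)) = 1 + 8/3 by push_cast; ring, Real.rpow_add hx0,
      Real.rpow_one]
  set s : ℝ := Real.sqrt (2 * C) with hs
  have hs0 : 0 < s := Real.sqrt_pos.mpr (by linarith)
  have hs2 : s ^ 2 = 2 * C := Real.sq_sqrt (by linarith)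
  have hn0 : (0 : ℝ) ≤ (n : ℝ) := Nat.cast_nonneg n
  have key : (n : ℝ) ^ 2 - x * (n : ℝ) ≤ 2 * C * K ^ 2 := by
    have h := hQge.trans hQle
    have h2 : (n : ℝ) ^ 2 / (2 * x) - (n : ℝ) / 2 ≤ C * x ^ ((8:ℝ)/3) := h
    have h3 := mul_le_mul_of_nonneg_left h2 (le_of_lt (by positivity : (0:ℝ) < 2 * x))
    have hne : (2 : ℝ) * x ≠ 0 := by positivity
    rw [mul_sub, mul_div_cancel₀ _ hne] at h3
    nlinarith [hsq]
  by_contra hcon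
  push_neg at hcon
  have hKn : s * K + K < (n : ℝ) := by nlinarith
  have hK0 : (0:ℝ) < K := lt_of_lt_of_le one_pos hK1
  nlinarith [mul_le_mul_of_nonneg_right hxK hn0, mul_pos hs0 hK0,
    mul_lt_mul_of_pos_left hKn (mul_pos hs0 hK0),
    mul_pos (mul_pos hs0 hK0) hK0,
    mul_pos (show (0:ℝ) < (n:ℝ) - s*K - K by linarith) (Nat.cast_pos.mpr hn)]
end
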